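/- For every positive integer n, the sum over k from 0 to n of (n/(n+k)) * C(n+k, n-k) * 5^k equals L_{4n}/2, where L_m is the m-th Lucas number. -/

import Mathlib

open Finset

/-- Fibonacci numbers extended to all integers: `F_{-n} = (-1)^{n-1} F_n`. -/
def fibZ (n : ℤ) : ℤ :=
  if 0 ≤ n then Nat.fib n.toNat else (-1) ^ (n.natAbs + 1) * Nat.fib n.natAbs

/-- Lucas numbers extended to all integers: `L_n = F_{n-1} + F_{n+1}`. -/
def lucasZ (n : ℤ) : ℤ := fibZ (n - 1) + fibZ (n + 1)

private lemma fibZ_natCast (a : ℕ) : fibZ (a : ℤ) = Nat.fib a := by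
  simp [fibZ]

private def B (n : ℕ) : ℤ := ∑ k ∈ range (n+1), (Nat.choose (n+k) (2*k) : ℤ) * 5 ^ k
private def D (n : ℕ) : ℤ := ∑ k ∈ range (n+1), (Nat.choose (n+k) (2*k+1) : ℤ) * 5 ^ k

private lemma D_succ (n : ℕ) : D (n+1) = D n + B n := by
  unfold D B
  have h : ∀ k ∈ range (n+2),
      (Nat.choose (n+1+k) (2*k+1) : ℤ) * 5 ^ k =
      (Nat.choose (n+k) (2*k) : ℤ) * 5 ^ k + (Nat.choose (n+k) (2*k+1) : ℤ) * 5 ^ k := by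
    intro k _
    have e : n+1+k = (n+k)+1 := by omega
    rw [e, Nat.choose_succ_succ]
    push_cast; ring
  rw [Finset.sum_congr rfl h, Finset.sum_add_distrib]
  rw [Finset.sum_range_succ, Finset.sum_range_succ
    (f := fun k => (Nat.choose (n+k) (2*k+1) : ℤ) * 5 ^ k)]
  have z1 : Nat.choose (n+(n+1)) (2*(n+1)) = 0 := Nat.choose_eq_zero_of_lt (by omega)
  have z2 : Nat.choose (n+(n+1)) (2*(n+1)+1) = 0 := Nat.choose_eq_zero_of_lt (by omega)
  rw [z1, z2]
  push_cast; ring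

private lemma B_succ (n : ℕ) : B (n+1) = 6 * B n + 5 * D n := by
  have hD : D (n+1) = D n + B n := D_succ n
  have hB1 : B (n+1) =
      (∑ k ∈ range (n+1), (Nat.choose (n+1+(k+1)) (2*(k+1)) : ℤ) * 5 ^ (k+1)) + 1 := by
    unfold B
    rw [Finset.sum_range_succ']
    norm_num
  have step : ∀ k, (Nat.choose (n+1+(k+1)) (2*(k+1)) : ℤ) * 5 ^ (k+1) =
      5 * ((Nat.choose (n+1+k) (2*k+1) : ℤ) * 5 ^ k)
      + 5 * ((Nat.choose (n+1+k) (2*k+2) : ℤ) * 5 ^ k) := by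
    intro k
    have e : n+1+(k+1) = (n+1+k)+1 := by omega
    have e2 : 2*(k+1) = (2*k+1)+1 := by omega
    rw [e, e2, Nat.choose_succ_succ]
    push_cast; ring
  have hB2 : B (n+1) =
      5 * (∑ k ∈ range (n+1), (Nat.choose (n+1+k) (2*k+1) : ℤ) * 5 ^ k)
      + 5 * (∑ k ∈ range (n+1), (Nat.choose (n+1+k) (2*k+2) : ℤ) * 5 ^ k) + 1 := by
    rw [hB1, Finset.sum_congr rfl (fun k _ => step k), Finset.sum_add_distrib,
      ← Finset.mul_sum, ← Finset.mul_sum]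
  have hS1 : D (n+1) = (∑ k ∈ range (n+1), (Nat.choose (n+1+k) (2*k+1) : ℤ) * 5 ^ k) := by
    unfold D
    rw [Finset.sum_range_succ]
    have z : Nat.choose (n+1+(n+1)) (2*(n+1)+1) = 0 := Nat.choose_eq_zero_of_lt (by omega)
    rw [z]; push_cast; ring
  have hS2 : B n = 5 * (∑ k ∈ range (n+1), (Nat.choose (n+1+k) (2*k+2) : ℤ) * 5 ^ k) + 1 := by
    unfold B
    rw [Finset.sum_range_succ']
    rw [Finset.sum_range_succ (f := fun k => (Nat.choose (n+1+k) (2*k+2) : ℤ) * 5 ^ k)]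
    have z : Nat.choose (n+1+n) (2*n+2) = 0 := Nat.choose_eq_zero_of_lt (by omega)
    have h : ∀ k ∈ range n, (Nat.choose (n+(k+1)) (2*(k+1)) : ℤ) * 5 ^ (k+1) =
        5 * ((Nat.choose (n+1+k) (2*k+2) : ℤ) * 5 ^ k) := by
      intro k _
      have e : n+(k+1) = n+1+k := by omega
      have e2 : 2*(k+1) = 2*k+2 := by omega
      rw [e, e2]; ring
    rw [Finset.sum_congr rfl h, ← Finset.mul_sum, z]
    simp [Nat.choose_zero_right]
  rw [hB2, ← hS1, hD]
  linarith

private lemma B_rec (n : ℕ) : B (n+2) = 7 * B (n+1) - B n := by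
  have h1 := B_succ (n+1)
  have h2 := B_succ n
  have h3 := D_succ n
  linarith

private lemma fib_cast (j : ℕ) : (Nat.fib (j+2) : ℤ) = Nat.fib j + Nat.fib (j+1) := by
  rw [Nat.fib_add_two]; push_cast; ring

private lemma fib_aux (m : ℕ) : (Nat.fib (m+8) : ℤ) + Nat.fib m = 7 * Nat.fib (m+4) := by
  have a : (Nat.fib (m+2) : ℤ) = Nat.fib m + Nat.fib (m+1) := fib_cast m
  have b : (Nat.fib (m+3) : ℤ) = Nat.fib (m+1) + Nat.fib (m+2) := fib_cast (m+1)
  have c : (Nat.fib (m+4) : ℤ) = Nat.fib (m+2) + Nat.fib (m+3) := fib_cast (m+2)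
  have d : (Nat.fib (m+5) : ℤ) = Nat.fib (m+3) + Nat.fib (m+4) := fib_cast (m+3)
  have e : (Nat.fib (m+6) : ℤ) = Nat.fib (m+4) + Nat.fib (m+5) := fib_cast (m+4)
  have f : (Nat.fib (m+7) : ℤ) = Nat.fib (m+5) + Nat.fib (m+6) := fib_cast (m+5)
  have g : (Nat.fib (m+8) : ℤ) = Nat.fib (m+6) + Nat.fib (m+7) := fib_cast (m+6)
  linarith

private lemma key (n : ℕ) : B (n+1) + B n = (Nat.fib (4*n+3) : ℤ) + Nat.fib (4*n+5) := by
  induction n using Nat.twoStepInduction with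
  | zero =>
    show B 1 + B 0 = (Nat.fib 3 : ℤ) + Nat.fib 5
    norm_num [B, Finset.sum_range_succ]
  | one =>
    show B 2 + B 1 = (Nat.fib 7 : ℤ) + Nat.fib 9
    norm_num [B, Finset.sum_range_succ]
  | more n ih1 ih2 =>
    have ih1' : B (n+1) + B n = (Nat.fib (4*n+3) : ℤ) + Nat.fib (4*n+5) := ih1
    have ih2' : B (n+2) + B (n+1) = (Nat.fib (4*n+7) : ℤ) + Nat.fib (4*n+9) := ih2
    have r1 := B_rec n
    have r2 := B_rec (n+1)
    have f1 : (Nat.fib (4*n+11) : ℤ) + Nat.fib (4*n+3) = 7 * Nat.fib (4*n+7) := fib_aux (4*n+3)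
    have f2 : (Nat.fib (4*n+13) : ℤ) + Nat.fib (4*n+5) = 7 * Nat.fib (4*n+9) := fib_aux (4*n+5)
    show B (n+3) + B (n+2) = (Nat.fib (4*n+11) : ℤ) + Nat.fib (4*n+13)
    linarith

private lemma choose_id (n k : ℕ) (h1 : 1 ≤ n) (hk : k ≤ n) :
    2 * n * Nat.choose (n+k) (2*k) = (n+k) * (Nat.choose (n+k) (2*k) + Nat.choose (n+k-1) (2*k)) := by
  rcases eq_or_lt_of_le hk with h | hlt
  · subst h
    have z : Nat.choose (k+k-1) (2*k) = 0 := Nat.choose_eq_zero_of_lt (by omega)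
    have o : Nat.choose (k+k) (2*k) = 1 := by
      rw [show k+k = 2*k by ring]; exact Nat.choose_self _
    rw [z, o]
    omega
  · have hkey : (n+k) * Nat.choose (n+k-1) (2*k) = (n-k) * Nat.choose (n+k) (2*k) := by
      have h : (n+k-1).succ * Nat.choose (n+k-1) (n-k-1) = Nat.choose (n+k-1).succ (n-k-1).succ * (n-k-1).succ :=
        Nat.add_one_mul_choose_eq (n+k-1) (n-k-1)
      have e1 : Nat.succ (n+k-1) = n+k := by omega
      have e2 : (n-k-1).succ = n-k := by omega
      rw [e1, e2] at h
      have s1 : Nat.choose (n+k-1) (n-k-1) = Nat.choose (n+k-1) (2*k) := by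
        rw [show n-k-1 = (n+k-1) - (2*k) by omega]
        exact Nat.choose_symm (by omega)
      have s2 : Nat.choose (n+k) (n-k) = Nat.choose (n+k) (2*k) := by
        rw [show n-k = (n+k) - (2*k) by omega]
        exact Nat.choose_symm (by omega)
      rw [s1, s2] at h
      rw [h]; ring
    have : (n+k) * (Nat.choose (n+k) (2*k) + Nat.choose (n+k-1) (2*k))
        = (n+k) * Nat.choose (n+k) (2*k) + (n-k) * Nat.choose (n+k) (2*k) := by
      rw [Nat.mul_add, hkey]
    rw [this, ← Nat.add_mul]
    congr 1
    omega

private lemma termQ (n k : ℕ) (h1 : 1 ≤ n) (hk : k ≤ n) :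
    ((n : ℚ) / (n + k)) * (Nat.choose (n + k) (n - k)) * 5 ^ k =
    ((Nat.choose (n+k) (2*k) : ℚ) + Nat.choose (n+k-1) (2*k)) / 2 * 5 ^ k := by
  have hc : Nat.choose (n+k) (n-k) = Nat.choose (n+k) (2*k) := by
    rw [show n - k = (n+k) - (2*k) by omega]
    exact Nat.choose_symm (by omega)
  rw [hc]
  have hne : (n : ℚ) + k ≠ 0 := by
    have : ((n+k : ℕ) : ℚ) ≠ 0 := Nat.cast_ne_zero.mpr (by omega)
    push_cast at this; exact this
  have hkey : (2 * n * Nat.choose (n+k) (2*k) : ℚ)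
      = (n+k) * (Nat.choose (n+k) (2*k) + Nat.choose (n+k-1) (2*k)) := by
    exact_mod_cast congrArg (Nat.cast : ℕ → ℚ) (choose_id n k h1 hk)
  field_simp
  linear_combination hkey

theorem stmt_10 (n : ℕ) (hn : 0 < n) :
    ∑ k ∈ range (n + 1), ((n : ℚ) / (n + k)) * (Nat.choose (n + k) (n - k)) * 5 ^ k =
    (lucasZ (4 * n) : ℚ) / 2 := by
  obtain ⟨m, rfl⟩ : ∃ m, n = m + 1 := ⟨n - 1, by omega⟩
  have h1 : ∑ k ∈ range (m + 1 + 1), ((↑(m+1) : ℚ) / (↑(m+1) + k)) * (Nat.choose (m+1+k) (m+1-k)) * 5 ^ k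
      = ∑ k ∈ range (m + 2), ((Nat.choose (m+1+k) (2*k) : ℚ) + Nat.choose (m+k) (2*k)) / 2 * 5 ^ k := by
    refine Finset.sum_congr (by norm_num) (fun k hk => ?_)
    have hk' : k ≤ m + 1 := by simpa using Nat.lt_succ_iff.mp (Finset.mem_range.mp hk)
    have := termQ (m+1) k (by omega) hk'
    rw [show m+1+k-1 = m+k by omega] at this
    exact this
  rw [h1]
  have h2 : ∑ k ∈ range (m + 2), ((Nat.choose (m+1+k) (2*k) : ℚ) + Nat.choose (m+k) (2*k)) / 2 * 5 ^ k
      = ((B (m+1) : ℚ) + (B m : ℚ)) / 2 := by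
    have e : ∀ k ∈ range (m+2), ((Nat.choose (m+1+k) (2*k) : ℚ) + Nat.choose (m+k) (2*k)) / 2 * 5 ^ k
        = (Nat.choose (m+1+k) (2*k) : ℚ) * 5 ^ k / 2 + (Nat.choose (m+k) (2*k) : ℚ) * 5 ^ k / 2 := by
      intro k _; ring
    rw [Finset.sum_congr rfl e, Finset.sum_add_distrib]
    have hB1 : ∑ k ∈ range (m+2), (Nat.choose (m+1+k) (2*k) : ℚ) * 5 ^ k / 2 = (B (m+1) : ℚ) / 2 := by
      rw [← Finset.sum_div]
      congr 1
      unfold B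
      push_cast
      rfl
    have hB2 : ∑ k ∈ range (m+2), (Nat.choose (m+k) (2*k) : ℚ) * 5 ^ k / 2 = (B m : ℚ) / 2 := by
      rw [← Finset.sum_div]
      congr 1
      rw [Finset.sum_range_succ]
      have z : Nat.choose (m+(m+1)) (2*(m+1)) = 0 := Nat.choose_eq_zero_of_lt (by omega)
      rw [z]
      unfold B
      push_cast
      ring
    rw [hB1, hB2]; ring
  rw [h2]
  have h3 : lucasZ (4 * ((m+1 : ℕ) : ℤ)) = (Nat.fib (4*m+3) : ℤ) + Nat.fib (4*m+5) := by
    unfold lucasZ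
    rw [show (4 * ((m+1:ℕ):ℤ) - 1) = ((4*m+3 : ℕ) : ℤ) by push_cast; ring,
        show (4 * ((m+1:ℕ):ℤ) + 1) = ((4*m+5 : ℕ) : ℤ) by push_cast; ring,
        fibZ_natCast, fibZ_natCast]
  have h4 := key m
  have : (lucasZ (4 * ((m+1:ℕ):ℤ)) : ℚ) = (B (m+1) : ℚ) + (B m : ℚ) := by
    rw [h3]
    push_cast
    exact_mod_cast congrArg (Int.cast : ℤ → ℚ) h4.symm
  rw [show ((4 : ℤ) * ((m+1:ℕ):ℤ)) = 4 * ((m+1:ℕ):ℤ) from rfl]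
  rw [this]
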